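/- Let k be an algebraically closed field of characteristic zero and A ∈ k[[z]] of order n ≥ 2. The set G_A = {φ of order 1 : A ∘ φ = A} is a cyclic group of order n under composition. -/

import Mathlib

open PowerSeries

/-- Composition (substitution) `comp A B = A ∘ B` of formal power series,
the standard coefficient formula, well-behaved when `B` has zero constant term. -/
noncomputable def comp {k : Type*} [Field k] (A B : PowerSeries k) : PowerSeries k :=
  PowerSeries.mk fun n =>
    ∑ i ∈ Finset.range (n + 1), (PowerSeries.coeff i A) * (PowerSeries.coeff n (B ^ i))

/-- `iterComp φ j` is the `j`-fold compositional iterate `φ^{∘j}` (with `φ^{∘0} = z`). -/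
noncomputable def iterComp {k : Type*} [Field k] (φ : PowerSeries k) : ℕ → PowerSeries k
  | 0 => PowerSeries.X
  | n + 1 => comp φ (iterComp φ n)

/-- Composition of a list of power series: `compList [A₁, …, A_r] = A₁ ∘ ⋯ ∘ A_r`. -/
noncomputable def compList {k : Type*} [Field k] : List (PowerSeries k) → PowerSeries k
  | [] => PowerSeries.X
  | a :: t => comp a (compList t)

namespace StmtAux

variable {k : Type*} [Field k]

lemma coeff_comp (A B : PowerSeries k) (m : ℕ) :
    coeff m (comp A B) = ∑ i ∈ Finset.range (m+1), coeff i A * coeff m (B ^ i) := by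
  simp [comp]

lemma coeff_pow_eq_zero {B : PowerSeries k} (hB : coeff 0 B = 0) :
    ∀ (i : ℕ) {m : ℕ}, m < i → coeff m (B ^ i) = 0 := by
  intro i
  induction i with
  | zero => intro m h; omega
  | succ i ih =>
    intro m h
    rw [pow_succ', coeff_mul]
    apply Finset.sum_eq_zero
    intro x hx
    rw [Finset.HasAntidiagonal.mem_antidiagonal] at hx
    by_cases h1 : x.1 = 0
    · rw [h1, hB, zero_mul]
    · rw [ih (show x.2 < i by omega), mul_zero]

lemma coeff_pow_congr {B B' : PowerSeries k} (hB : coeff 0 B = 0) (hB' : coeff 0 B' = 0)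
    {d : ℕ} (h : ∀ j ≤ d, coeff j B = coeff j B') :
    ∀ (i : ℕ) {m : ℕ}, m < d + i → coeff m (B ^ i) = coeff m (B' ^ i) := by
  intro i
  induction i with
  | zero => intro m _; rfl
  | succ i ih =>
    intro m hm
    rw [pow_succ', pow_succ', coeff_mul, coeff_mul]
    apply Finset.sum_congr rfl
    intro x hx
    rw [Finset.HasAntidiagonal.mem_antidiagonal] at hx
    by_cases h1 : x.1 = 0
    · rw [h1, hB, hB', zero_mul, zero_mul]
    · by_cases h2 : x.2 < i
      · rw [coeff_pow_eq_zero hB i h2, coeff_pow_eq_zero hB' i h2, mul_zero, mul_zero]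
      · rw [h x.1 (by omega), ih (show x.2 < d + i by omega)]

lemma coeff_pow_self {B : PowerSeries k} (hB : coeff 0 B = 0) :
    ∀ i : ℕ, coeff i (B ^ i) = (coeff 1 B) ^ i := by
  intro i; induction i with
  | zero => simp
  | succ i ih =>
    rw [pow_succ', coeff_mul, Finset.Nat.sum_antidiagonal_eq_sum_range_succ_mk,
      Finset.sum_eq_single 1]
    · rw [show i + 1 - 1 = i from rfl, ih, pow_succ']
    · intro p hp hp1
      rw [Finset.mem_range] at hp
      by_cases h0 : p = 0
      · rw [h0, hB, zero_mul]
      · rw [coeff_pow_eq_zero hB i (show i + 1 - p < i by omega), mul_zero]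
    · intro hmem; exact absurd (Finset.mem_range.mpr (by omega)) hmem

lemma coeff_pow_sub {B B' : PowerSeries k} (hB : coeff 0 B = 0) (hB' : coeff 0 B' = 0)
    {d : ℕ} (hd : 2 ≤ d) (h : ∀ j < d, coeff j B = coeff j B') :
    ∀ i : ℕ, coeff (d + i) (B ^ (i+1)) - coeff (d + i) (B' ^ (i+1))
      = ((i:k)+1) * (coeff 1 B) ^ i * (coeff d B - coeff d B') := by
  intro i
  induction i with
  | zero => simp
  | succ i ih =>
    have h1 : coeff 1 B = coeff 1 B' := h 1 (by omega)
    rw [pow_succ' B, pow_succ' B', coeff_mul, coeff_mul,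
        Finset.Nat.sum_antidiagonal_eq_sum_range_succ_mk,
        Finset.Nat.sum_antidiagonal_eq_sum_range_succ_mk, ← Finset.sum_sub_distrib]
    have key : ∀ p ∈ Finset.range (d + (i+1) + 1),
        coeff p B * coeff (d + (i+1) - p) (B ^ (i+1))
          - coeff p B' * coeff (d + (i+1) - p) (B' ^ (i+1))
        = (if p = 1 then coeff 1 B * (((i:k)+1) * (coeff 1 B)^i * (coeff d B - coeff d B')) else 0)
          + (if p = d then (coeff 1 B)^(i+1) * (coeff d B - coeff d B') else 0) := by
      intro p hp
      rw [Finset.mem_range] at hp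
      rcases eq_or_ne p 1 with rfl | hp1
      · rw [if_pos rfl, if_neg (by omega), add_zero,
          show d + (i+1) - 1 = d + i by omega, ← h1, ← mul_sub, ih]
      · rw [if_neg hp1]
        rcases eq_or_ne p d with rfl | hpd
        · rw [if_pos rfl, zero_add, show p + (i+1) - p = i + 1 by omega,
            coeff_pow_self hB, coeff_pow_self hB', ← h1, ← sub_mul, mul_comm]
        · rw [if_neg hpd, add_zero]
          rcases eq_or_ne p 0 with rfl | hp0
          · rw [hB, hB', zero_mul, zero_mul, sub_zero]
          · rcases lt_or_ge p d with hlt | hge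
            · -- 2 ≤ p < d
              have hagree : ∀ j ≤ d - 1, coeff j B = coeff j B' := fun j hj => h j (by omega)
              rw [h p hlt,
                coeff_pow_congr hB hB' hagree (i+1) (show d + (i+1) - p < (d-1) + (i+1) by omega),
                sub_self]
            · -- p > d
              rw [coeff_pow_eq_zero hB (i+1) (show d + (i+1) - p < i + 1 by omega),
                coeff_pow_eq_zero hB' (i+1) (show d + (i+1) - p < i + 1 by omega),
                mul_zero, mul_zero, sub_self]
    rw [Finset.sum_congr rfl key, Finset.sum_add_distrib, Finset.sum_ite_eq', Finset.sum_ite_eq',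
      if_pos (Finset.mem_range.mpr (by omega)), if_pos (Finset.mem_range.mpr (by omega))]
    push_cast
    ring

lemma coeff_comp_congr {A B B' : PowerSeries k} {n : ℕ} (hA : ∀ i < n, coeff i A = 0)
    (hB : coeff 0 B = 0) (hB' : coeff 0 B' = 0) {d m : ℕ}
    (h : ∀ j ≤ d, coeff j B = coeff j B') (hm : m < d + n) :
    coeff m (comp A B) = coeff m (comp A B') := by
  rw [coeff_comp, coeff_comp]
  refine Finset.sum_congr rfl fun i _ => ?_
  by_cases hin : i < n
  · rw [hA i hin, zero_mul, zero_mul]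
  · rw [coeff_pow_congr hB hB' h i (by omega)]

lemma coeff_comp_sub {A B B' : PowerSeries k} {e : ℕ} (hA : ∀ i < e + 1, coeff i A = 0)
    (hB : coeff 0 B = 0) (hB' : coeff 0 B' = 0) {d : ℕ} (hd : 2 ≤ d)
    (h : ∀ j < d, coeff j B = coeff j B') :
    coeff (d + e) (comp A B) - coeff (d + e) (comp A B')
      = ((e:k)+1) * coeff (e+1) A * (coeff 1 B) ^ e * (coeff d B - coeff d B') := by
  rw [coeff_comp, coeff_comp, ← Finset.sum_sub_distrib]
  have key : ∀ i ∈ Finset.range (d + e + 1),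
      coeff i A * coeff (d+e) (B ^ i) - coeff i A * coeff (d+e) (B' ^ i)
      = if i = e + 1 then ((e:k)+1) * coeff (e+1) A * (coeff 1 B)^e * (coeff d B - coeff d B') else 0 := by
    intro i _
    rcases eq_or_ne i (e+1) with rfl | hie
    · rw [if_pos rfl, ← mul_sub, coeff_pow_sub hB hB' hd h e]
      ring
    · rw [if_neg hie]
      rcases lt_or_ge i (e+1) with hlt | hge
      · rw [hA i hlt, zero_mul, zero_mul, sub_self]
      · have hagree : ∀ j ≤ d - 1, coeff j B = coeff j B' := fun j hj => h j (by omega)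
        rw [coeff_pow_congr hB hB' hagree i (show d + e < (d-1) + i by omega), sub_self]
  rw [Finset.sum_congr rfl key, Finset.sum_ite_eq', if_pos (Finset.mem_range.mpr (by omega))]

lemma coeff_n_comp {A φ : PowerSeries k} {n : ℕ} (hlow : ∀ i < n, coeff i A = 0)
    (hφ0 : coeff 0 φ = 0) :
    coeff n (comp A φ) = coeff n A * (coeff 1 φ) ^ n := by
  rw [coeff_comp, Finset.sum_eq_single n]
  · rw [coeff_pow_self hφ0]
  · intro i hi hin
    rw [Finset.mem_range] at hi
    rw [hlow i (by omega), zero_mul]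
  · intro hmem; exact absurd (Finset.mem_range.mpr (by omega)) hmem

noncomputable def solCoeff (A : PowerSeries k) (n : ℕ) (ζ : k) : ℕ → k
  | 0 => 0
  | 1 => ζ
  | d + 2 =>
    (coeff (n + d + 1) A - coeff (n + d + 1)
        (comp A (PowerSeries.mk fun j => if h : j < d + 2 then solCoeff A n ζ j else 0)))
      / ((n : k) * coeff n A * ζ ^ (n - 1))

lemma solCoeff_zero (A : PowerSeries k) (n : ℕ) (ζ : k) : solCoeff A n ζ 0 = 0 := by
  rw [solCoeff]

lemma solCoeff_one (A : PowerSeries k) (n : ℕ) (ζ : k) : solCoeff A n ζ 1 = ζ := by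
  rw [solCoeff]

lemma comp_solCoeff {A : PowerSeries k} {n : ℕ} (hn : 2 ≤ n)
    (hlow : ∀ i < n, coeff i A = 0) (hc : coeff n A ≠ 0)
    (hnk : (n : k) ≠ 0) {ζ : k} (hζ : ζ ^ n = 1) :
    comp A (PowerSeries.mk (solCoeff A n ζ)) = A := by
  have hζ0 : ζ ≠ 0 := by
    intro h; rw [h, zero_pow (by omega)] at hζ; exact one_ne_zero hζ.symm
  set φ := PowerSeries.mk (solCoeff A n ζ) with hφdef
  have hφ0 : coeff 0 φ = 0 := by rw [hφdef, coeff_mk, solCoeff_zero]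
  have hφ1 : coeff 1 φ = ζ := by rw [hφdef, coeff_mk, solCoeff_one]
  ext m
  rcases lt_trichotomy m n with hm | rfl | hm
  · rw [hlow m hm, coeff_comp]
    apply Finset.sum_eq_zero
    intro i hi
    rw [Finset.mem_range] at hi
    rw [hlow i (by omega), zero_mul]
  · rw [coeff_n_comp hlow hφ0, hφ1, hζ, mul_one]
  · obtain ⟨d, rfl⟩ : ∃ d, m = n + d + 1 := ⟨m - n - 1, by omega⟩
    obtain ⟨e, rfl⟩ : ∃ e, n = e + 1 := ⟨n - 1, by omega⟩
    set φ₀ := PowerSeries.mk fun j => if h : j < d + 2 then solCoeff A (e+1) ζ j else 0 with hφ₀def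
    have hφ₀0 : coeff 0 φ₀ = 0 := by
      rw [hφ₀def, coeff_mk, dif_pos (by omega), solCoeff_zero]
    have hagree : ∀ j < d + 2, coeff j φ = coeff j φ₀ := by
      intro j hj
      rw [hφdef, hφ₀def, coeff_mk, coeff_mk, dif_pos hj]
    have hsub := coeff_comp_sub hlow hφ0 hφ₀0 (show 2 ≤ d + 2 by omega) hagree
    rw [show (d+2) + e = e + 1 + d + 1 by omega, hφ1] at hsub
    have hφ₀D : coeff (d+2) φ₀ = 0 := by
      rw [hφ₀def, coeff_mk, dif_neg (by omega)]
    have hφD : coeff (d+2) φ * (((e:k)+1) * coeff (e+1) A * ζ ^ e) =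
        coeff (e+1+d+1) A - coeff (e+1+d+1) (comp A φ₀) := by
      rw [hφdef, coeff_mk, solCoeff]
      rw [show (e + 1 : ℕ) - 1 = e from rfl]
      rw [show ((e+1 : ℕ) : k) = (e : k) + 1 by push_cast; ring]
      rw [div_mul_cancel₀]
      exact mul_ne_zero (mul_ne_zero (by exact_mod_cast hnk) hc) (pow_ne_zero _ hζ0)
    rw [hφ₀D, sub_zero] at hsub
    have : coeff (e+1+d+1) (comp A φ) - coeff (e+1+d+1) (comp A φ₀)
        = coeff (e+1+d+1) A - coeff (e+1+d+1) (comp A φ₀) := by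
      rw [hsub, ← hφD]; ring
    exact sub_left_inj.mp this
lemma comp_eq_unique {A φ φ' : PowerSeries k} {n : ℕ} (hn : 2 ≤ n)
    (hlow : ∀ i < n, coeff i A = 0) (hc : coeff n A ≠ 0) (hnk : (n : k) ≠ 0)
    (hφ0 : coeff 0 φ = 0) (hφ'0 : coeff 0 φ' = 0) (hφ1 : coeff 1 φ ≠ 0)
    (h1 : coeff 1 φ = coeff 1 φ')
    (hφ : comp A φ = A) (hφ' : comp A φ' = A) : φ = φ' := by
  obtain ⟨e, rfl⟩ : ∃ e, n = e + 1 := ⟨n - 1, by omega⟩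
  ext m
  induction m using Nat.strong_induction_on with
  | _ m ih =>
    match m, ih with
    | 0, _ => rw [hφ0, hφ'0]
    | 1, _ => exact h1
    | (d+2), ih =>
      have hagree : ∀ j < d + 2, coeff j φ = coeff j φ' := fun j hj => ih j (by omega)
      have hsub := coeff_comp_sub hlow hφ0 hφ'0 (show 2 ≤ d + 2 by omega) hagree
      rw [hφ, hφ', sub_self] at hsub
      have hne : ((e:k)+1) * coeff (e+1) A * (coeff 1 φ) ^ e ≠ 0 :=
        mul_ne_zero (mul_ne_zero (by exact_mod_cast hnk) hc) (pow_ne_zero _ hφ1)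
      have h0 := (mul_eq_zero.mp hsub.symm).resolve_left hne
      exact sub_eq_zero.mp h0

lemma coeff_aeval {C : PowerSeries k} (hC : coeff 0 C = 0) (p : Polynomial k) (m : ℕ) :
    coeff m (Polynomial.aeval C p) = ∑ i ∈ Finset.range (m+1), p.coeff i * coeff m (C ^ i) := by
  rw [Polynomial.aeval_eq_sum_range, map_sum]
  simp only [coeff_smul, smul_eq_mul]
  refine (Finset.sum_subset (Finset.range_subset_range.mpr
      (le_max_left (p.natDegree + 1) (m + 1))) ?_).trans
    (Finset.sum_subset (Finset.range_subset_range.mpr (le_max_right (p.natDegree + 1) (m + 1))) ?_).symm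
  · intro i _ hi
    rw [Finset.mem_range, not_lt] at hi
    rw [Polynomial.coeff_eq_zero_of_natDegree_lt (by omega), zero_mul]
  · intro i _ hi
    rw [Finset.mem_range, not_lt] at hi
    rw [coeff_pow_eq_zero hC i (by omega), mul_zero]

lemma coeff_comp_eq_aeval {F C : PowerSeries k} (hC : coeff 0 C = 0) {m N : ℕ} (hN : m < N) :
    coeff m (comp F C) = coeff m (Polynomial.aeval C (trunc N F)) := by
  rw [coeff_comp, coeff_aeval hC]
  refine Finset.sum_congr rfl fun i hi => ?_
  rw [Finset.mem_range] at hi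
  rw [coeff_trunc, if_pos (by omega)]

lemma comp_mul {F G C : PowerSeries k} (hC : coeff 0 C = 0) :
    comp (F * G) C = comp F C * comp G C := by
  ext m
  rw [coeff_comp_eq_aeval hC (Nat.lt_succ_self m) (F := F * G)]
  have step1 : coeff m (Polynomial.aeval C (trunc (m+1) (F * G)))
      = coeff m (Polynomial.aeval C (trunc (m+1) F * trunc (m+1) G)) := by
    rw [coeff_aeval hC, coeff_aeval hC]
    refine Finset.sum_congr rfl fun i hi => ?_
    rw [Finset.mem_range] at hi
    rw [coeff_trunc, if_pos (by omega), PowerSeries.coeff_mul, Polynomial.coeff_mul]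
    refine congrArg (· * _) (Finset.sum_congr rfl fun x hx => ?_)
    rw [Finset.HasAntidiagonal.mem_antidiagonal] at hx
    rw [coeff_trunc, coeff_trunc, if_pos (by omega), if_pos (by omega)]
  rw [step1, map_mul, PowerSeries.coeff_mul, PowerSeries.coeff_mul]
  refine Finset.sum_congr rfl fun x hx => ?_
  rw [Finset.HasAntidiagonal.mem_antidiagonal] at hx
  rw [← coeff_comp_eq_aeval hC (show x.1 < m + 1 by omega),
    ← coeff_comp_eq_aeval hC (show x.2 < m + 1 by omega)]

lemma comp_one (C : PowerSeries k) : comp (1 : PowerSeries k) C = 1 := by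
  ext m
  rw [coeff_comp, Finset.sum_eq_single 0]
  · rw [pow_zero, coeff_one, if_pos rfl, one_mul]
  · intro i _ hi
    rw [coeff_one, if_neg hi, zero_mul]
  · intro hmem; exact absurd (Finset.mem_range.mpr (by omega)) hmem

lemma comp_pow {F C : PowerSeries k} (hC : coeff 0 C = 0) (i : ℕ) :
    comp (F ^ i) C = (comp F C) ^ i := by
  induction i with
  | zero => rw [pow_zero, pow_zero, comp_one]
  | succ i ih => rw [pow_succ, pow_succ, comp_mul hC, ih]

lemma comp_X (A : PowerSeries k) : comp A X = A := by
  ext m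
  rw [coeff_comp, Finset.sum_eq_single m]
  · rw [coeff_X_pow, if_pos rfl, mul_one]
  · intro i _ hi
    rw [coeff_X_pow, if_neg (fun h => hi h.symm), mul_zero]
  · intro hmem; exact absurd (Finset.mem_range.mpr (by omega)) hmem

lemma comp_assoc {A B C : PowerSeries k} (hB : coeff 0 B = 0) (hC : coeff 0 C = 0) :
    comp (comp A B) C = comp A (comp B C) := by
  ext m
  rw [coeff_comp, coeff_comp]
  have step1 : ∀ j ∈ Finset.range (m+1),
      coeff j (comp A B) * coeff m (C ^ j)
        = ∑ i ∈ Finset.range (m+1), coeff i A * coeff j (B ^ i) * coeff m (C ^ j) := by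
    intro j hj
    rw [Finset.mem_range] at hj
    rw [coeff_comp, Finset.sum_mul]
    refine Finset.sum_subset (Finset.range_subset_range.mpr (by omega)) ?_
    intro i _ hi
    rw [Finset.mem_range, not_lt] at hi
    rw [coeff_pow_eq_zero hB i (by omega), mul_zero, zero_mul]
  rw [Finset.sum_congr rfl step1, Finset.sum_comm]
  refine Finset.sum_congr rfl fun i _ => ?_
  rw [← comp_pow hC i, coeff_comp, Finset.mul_sum]
  refine Finset.sum_congr rfl fun j _ => ?_
  ring

lemma coeff_zero_comp (A B : PowerSeries k) : coeff 0 (comp A B) = coeff 0 A := by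
  rw [coeff_comp]
  simp

lemma coeff_one_comp (A B : PowerSeries k) : coeff 1 (comp A B) = coeff 1 A * coeff 1 B := by
  rw [coeff_comp, Finset.sum_range_succ, Finset.sum_range_one]
  simp [coeff_one]

lemma order_eq_one_iff {φ : PowerSeries k} :
    φ.order = 1 ↔ coeff 0 φ = 0 ∧ coeff 1 φ ≠ 0 := by
  rw [show (1 : ℕ∞) = ((1:ℕ) : ℕ∞) by norm_cast, order_eq_nat]
  constructor
  · rintro ⟨h1, h2⟩; exact ⟨h2 0 one_pos, h1⟩
  · rintro ⟨h0, h1⟩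
    exact ⟨h1, fun i hi => by interval_cases i; exact h0⟩

end StmtAux

open StmtAux

theorem stmt7 {k : Type*} [Field k] [IsAlgClosed k] [CharZero k]
    {n : ℕ} (hn : 2 ≤ n) (A : PowerSeries k) (hA : A.order = (n : ℕ∞)) :
    Set.ncard {φ : PowerSeries k | φ.order = 1 ∧ comp A φ = A} = n ∧
    ∃ ψ : PowerSeries k, (ψ.order = 1 ∧ comp A ψ = A) ∧
      ∀ φ : PowerSeries k, φ.order = 1 ∧ comp A φ = A → ∃ j : ℕ, φ = iterComp ψ j := by
  have hn0 : n ≠ 0 := by omega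
  have hnk : (n : k) ≠ 0 := Nat.cast_ne_zero.mpr hn0
  haveI : NeZero ((n : ℕ) : k) := ⟨hnk⟩
  haveI : NeZero n := ⟨hn0⟩
  rw [order_eq_nat] at hA
  obtain ⟨hc, hlow⟩ := hA
  obtain ⟨ζ, hζ⟩ := HasEnoughRootsOfUnity.exists_primitiveRoot k n
  have hζ1 : ζ ^ n = 1 := hζ.pow_eq_one
  have hζ0 : ζ ≠ 0 := by
    intro h; rw [h, zero_pow hn0] at hζ1; exact one_ne_zero hζ1.symm
  set S := {φ : PowerSeries k | φ.order = 1 ∧ comp A φ = A} with hS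
  have memS : ∀ φ : PowerSeries k,
      φ ∈ S ↔ ((coeff 0 φ = 0 ∧ coeff 1 φ ≠ 0) ∧ comp A φ = A) := by
    intro φ
    rw [hS, Set.mem_setOf_eq, order_eq_one_iff]
  have hroot : ∀ φ ∈ S, (coeff 1 φ) ^ n = 1 := by
    intro φ hφ
    rw [memS] at hφ
    have h := congrArg (coeff n) hφ.2
    rw [coeff_n_comp hlow hφ.1.1] at h
    exact mul_left_cancel₀ hc (by rw [h, mul_one])
  have hPhi : ∀ a : k, a ^ n = 1 → (PowerSeries.mk (solCoeff A n a)) ∈ S := by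
    intro a ha
    have ha0 : a ≠ 0 := by
      intro h; rw [h, zero_pow hn0] at ha; exact one_ne_zero ha.symm
    refine (memS _).mpr ⟨⟨?_, ?_⟩, comp_solCoeff hn hlow hc hnk ha⟩
    · rw [coeff_mk, solCoeff_zero]
    · rw [coeff_mk, solCoeff_one]; exact ha0
  have huniq : ∀ φ ∈ S, ∀ φ' ∈ S, coeff 1 φ = coeff 1 φ' → φ = φ' := by
    intro φ hφ φ' hφ' h1
    rw [memS] at hφ hφ'
    exact comp_eq_unique hn hlow hc hnk hφ.1.1 hφ'.1.1 hφ.1.2 h1 hφ.2 hφ'.2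
  have hSeq : S = (fun a : k => PowerSeries.mk (solCoeff A n a)) ''
      ((Polynomial.nthRootsFinset n (1 : k) : Finset k) : Set k) := by
    ext φ
    constructor
    · intro hφ
      refine ⟨coeff 1 φ, ?_, ?_⟩
      · exact (Polynomial.mem_nthRootsFinset (by omega) (1 : k)).mpr (hroot φ hφ)
      · exact (huniq _ (hPhi _ (hroot φ hφ)) _ hφ (by rw [coeff_mk, solCoeff_one]))
    · rintro ⟨a, ha, rfl⟩
      exact hPhi a ((Polynomial.mem_nthRootsFinset (by omega) (1 : k)).mp ha)
  constructor
  · rw [hSeq, Set.ncard_image_of_injOn, Set.ncard_coe_finset, hζ.card_nthRootsFinset]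
    intro a _ b _ hab
    have h := congrArg (coeff 1) hab
    rwa [coeff_mk, coeff_mk, solCoeff_one, solCoeff_one] at h
  · set ψ := PowerSeries.mk (solCoeff A n ζ) with hψdef
    have hψS : ψ ∈ S := hPhi ζ hζ1
    have hψ0 : coeff 0 ψ = 0 := by rw [hψdef, coeff_mk, solCoeff_zero]
    have hψ1 : coeff 1 ψ = ζ := by rw [hψdef, coeff_mk, solCoeff_one]
    refine ⟨ψ, hψS, ?_⟩
    intro φ hφ
    have hφS : φ ∈ S := hφ
    obtain ⟨j, hjn, hj⟩ := hζ.eq_pow_of_pow_eq_one (hroot φ hφS)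
    refine ⟨j, ?_⟩
    have hiter : ∀ i : ℕ, coeff 0 (iterComp ψ i) = 0 ∧ coeff 1 (iterComp ψ i) = ζ ^ i ∧
        comp A (iterComp ψ i) = A := by
      intro i
      induction i with
      | zero =>
        refine ⟨?_, ?_, comp_X A⟩
        · show coeff 0 (X : PowerSeries k) = 0
          simp
        · show coeff 1 (X : PowerSeries k) = ζ ^ 0
          simp
      | succ i ih =>
        obtain ⟨i0, i1, iA⟩ := ih
        refine ⟨?_, ?_, ?_⟩
        · show coeff 0 (comp ψ (iterComp ψ i)) = 0
          rw [coeff_zero_comp, hψ0]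
        · show coeff 1 (comp ψ (iterComp ψ i)) = ζ ^ (i+1)
          rw [coeff_one_comp, hψ1, i1, pow_succ']
        · show comp A (comp ψ (iterComp ψ i)) = A
          rw [← comp_assoc hψ0 i0, (memS ψ).mp hψS |>.2, iA]
    obtain ⟨i0, i1, iA⟩ := hiter j
    refine huniq φ hφS (iterComp ψ j) ?_ ?_
    · exact (memS _).mpr ⟨⟨i0, by rw [i1]; exact pow_ne_zero _ hζ0⟩, iA⟩
    · rw [i1, hj]
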